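/- Assume g = tr(B R_x Bᴴ) > 0, α ≠ 0, and a − |c|²/g > 0, where a = tr(Ḃ R_x Ḃᴴ) and c = tr(B R_x Ḃᴴ). Then the Fisher information matrix F̃ is invertible, and its inverse satisfies (F̃⁻¹)₁₁ = σ² / ( 2T|α|² · ( tr(Ḃ R_x Ḃᴴ) − |tr(B R_x Ḃᴴ)|² / tr(B R_x Bᴴ) ) ). (This is the closed-form Cramér–Rao bound CRB(θ) of Lemma 1.) -/

import Mathlib

open Matrix
open scoped ComplexOrder

/- STATEMENT 0: Closed-form CRB for DoA estimation (Lemma 1).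
If g = tr(B Rx Bᴴ) > 0, α ≠ 0, and a − |c|²/g > 0 (a = tr(Ḃ Rx Ḃᴴ),
c = tr(B Rx Ḃᴴ)), then the Fisher information matrix F̃ is invertible and
(F̃⁻¹)₁₁ = σ² / (2T|α|² (a − |c|²/g)). -/
theorem crb_point_target_lemma1 {M : ℕ}
    (T σ : ℝ) (hT : 0 < T) (hσ : 0 < σ)
    (α : ℂ)
    (B Bd Rx : Matrix (Fin M) (Fin M) ℂ)
    (hRx : Rx.PosSemidef)
    (a g : ℝ) (c : ℂ)
    (ha : (a : ℂ) = Matrix.trace (Bd * Rx * Bdᴴ))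
    (hg : (g : ℂ) = Matrix.trace (B * Rx * Bᴴ))
    (hc : c = Matrix.trace (B * Rx * Bdᴴ))
    (hgpos : 0 < g)
    (hα : α ≠ 0)
    (hpos : 0 < a - Complex.normSq c / g)
    (F : Matrix (Fin 3) (Fin 3) ℝ)
    (hF : F = (2 * T / σ ^ 2) •
      !![Complex.normSq α * a, (starRingEnd ℂ α * c).re, -((starRingEnd ℂ α * c).im);
         (starRingEnd ℂ α * c).re, g, 0;
         -((starRingEnd ℂ α * c).im), 0, g]) :
    IsUnit F.det ∧
      F⁻¹ 0 0 = σ ^ 2 / (2 * T * Complex.normSq α * (a - Complex.normSq c / g)) := by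
  have hk : (0:ℝ) < 2 * T / σ ^ 2 := by positivity
  have hnα : 0 < Complex.normSq α := Complex.normSq_pos.2 hα
  have hdet : F.det = (2 * T / σ ^ 2)^3 *
      (Complex.normSq α * g * g * (a - Complex.normSq c / g)) := by
    rw [hF, Matrix.det_fin_three]
    simp only [Matrix.smul_apply, Matrix.cons_val', Matrix.cons_val_zero, Matrix.cons_val_one,
      Matrix.head_cons, Matrix.empty_val', Matrix.cons_val_fin_one, Matrix.head_fin_const,
      Matrix.cons_val_two, Matrix.tail_cons, smul_eq_mul, Complex.normSq_apply,
      Complex.mul_re, Complex.mul_im, Complex.conj_re, Complex.conj_im, Matrix.of_apply]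
    field_simp
    ring
  have hdpos : 0 < F.det := by rw [hdet]; positivity
  have hdne : F.det ≠ 0 := ne_of_gt hdpos
  refine ⟨isUnit_iff_ne_zero.2 hdne, ?_⟩
  have hadj : F.adjugate 0 0 = (2 * T / σ ^ 2)^2 * (g * g) := by
    rw [hF, Matrix.adjugate_fin_three]
    simp [Matrix.smul_apply]
    ring
  rw [Matrix.inv_def, Matrix.smul_apply, hadj, hdet, Ring.inverse_eq_inv, smul_eq_mul]
  set D := a - Complex.normSq c / g with hD
  have hDne : D ≠ 0 := ne_of_gt hpos
  field_simp
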